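/- Let T be a polynomial of degree n ≥ 1 with complex coefficients, and let 2ν be the number of roots of T² − 1 of odd multiplicity, counted with multiplicity (i.e., 2ν = Σⱼ (2βⱼ − 1) over the distinct odd-multiplicity roots aⱼ with multiplicities 2βⱼ − 1). Then 2ν is indeed even and 1 ≤ ν ≤ n. -/

import Mathlib

open Polynomial

theorem sum_odd_multiplicities_even (T : Polynomial ℂ) (n : ℕ)
    (hn : 1 ≤ n) (hdeg : T.natDegree = n) :
    ∃ ν : ℕ, 1 ≤ ν ∧ ν ≤ n ∧
      (∑ z ∈ (T ^ 2 - 1).roots.toFinset.filter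
          (fun z => Odd ((T ^ 2 - 1).rootMultiplicity z)),
        (T ^ 2 - 1).rootMultiplicity z) = 2 * ν := by
  set P := T ^ 2 - 1 with hP
  have hdeg2 : P.natDegree = 2 * n := by
    have h1 : (T ^ 2).natDegree = 2 * n := by
      rw [natDegree_pow, hdeg]
    have hlt : (1 : ℂ[X]).natDegree < (T ^ 2).natDegree := by
      rw [h1, natDegree_one]; omega
    rw [hP, natDegree_sub_eq_left_of_natDegree_lt hlt, h1]
  have hPne : P ≠ 0 := by
    intro h; rw [h, natDegree_zero] at hdeg2; omega
  have hsplits : Splits P := IsAlgClosed.splits P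
  have hcard : Multiset.card P.roots = P.natDegree := splits_iff_card_roots.mp hsplits
  have htotal : ∑ a ∈ P.roots.toFinset, P.rootMultiplicity a = 2 * n := by
    rw [← hdeg2, ← hcard]
    simp_rw [← count_roots]
    exact Multiset.toFinset_sum_count_eq _
  set S := ∑ z ∈ P.roots.toFinset.filter (fun z => Odd (P.rootMultiplicity z)),
      P.rootMultiplicity z with hS
  have hsplit_sum : S + ∑ z ∈ P.roots.toFinset.filter
      (fun z => ¬ Odd (P.rootMultiplicity z)), P.rootMultiplicity z = 2 * n := by
    rw [hS, Finset.sum_filter_add_sum_filter_not]; exact htotal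
  have heven_rest : Even (∑ z ∈ P.roots.toFinset.filter
      (fun z => ¬ Odd (P.rootMultiplicity z)), P.rootMultiplicity z) := by
    apply Finset.even_sum
    intro i hi
    exact Nat.not_odd_iff_even.mp (Finset.mem_filter.mp hi).2
  have hevenS : Even S := by
    have h2n : Even (2 * n) := even_two_mul n
    rw [← hsplit_sum] at h2n
    exact (Nat.even_add.mp h2n).mpr heven_rest
  have hSle : S ≤ 2 * n := le_of_add_le_left (le_of_eq hsplit_sum)
  -- S ≠ 0
  have hSne : S ≠ 0 := by
    intro hS0
    -- then every root multiplicity is even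
    have hall : ∀ a : ℂ, Even (P.roots.count a) := by
      intro a
      by_cases ha : a ∈ P.roots.toFinset
      · by_cases hodd : Odd (P.rootMultiplicity a)
        · exfalso
          have hmem : a ∈ P.roots.toFinset.filter (fun z => Odd (P.rootMultiplicity z)) :=
            Finset.mem_filter.mpr ⟨ha, hodd⟩
          have hpos : 0 < P.rootMultiplicity a :=
            (rootMultiplicity_pos hPne).mpr (isRoot_of_mem_roots (Multiset.mem_toFinset.mp ha))
          have : 0 < S := Finset.sum_pos' (fun i _ => Nat.zero_le _) ⟨a, hmem, hpos⟩
          omega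
        · rw [count_roots]; exact Nat.not_odd_iff_even.mp hodd
      · rw [Multiset.count_eq_zero_of_notMem (fun h => ha (Multiset.mem_toFinset.mpr h))]
        exact Even.zero
    obtain ⟨u, hu⟩ := P.roots.exists_smul_of_dvd_count (k := 2)
      (fun a _ => (hall a).two_dvd)
    obtain ⟨c, hc⟩ := IsAlgClosed.exists_pow_nat_eq P.leadingCoeff (n := 2) zero_lt_two
    have hfac : P = C P.leadingCoeff * (P.roots.map fun a => X - C a).prod :=
      hsplits.eq_prod_roots
    set Q := C c * (u.map fun a => X - C a).prod with hQ
    have hsq : P = Q ^ 2 := by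
      rw [hfac, hu, Multiset.map_nsmul, Multiset.prod_nsmul, hQ, mul_pow, ← C_pow, hc]
    have hmul : (T - Q) * (T + Q) = 1 := by
      have hsq' : T ^ 2 - 1 = Q ^ 2 := hsq
      linear_combination hsq'
    have hu1 : IsUnit (T - Q) := IsUnit.of_mul_eq_one _ hmul
    have hu2 : IsUnit (T + Q) := IsUnit.of_mul_eq_one _ (by rw [mul_comm] at hmul; exact hmul)
    have hd1 : (T - Q).natDegree = 0 := natDegree_eq_zero_of_isUnit hu1
    have hd2 : (T + Q).natDegree = 0 := natDegree_eq_zero_of_isUnit hu2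
    have hsum : (T - Q) + (T + Q) = C 2 * T := by rw [map_ofNat]; ring
    have hdegsum : ((T - Q) + (T + Q)).natDegree = 0 :=
      Nat.le_zero.mp ((natDegree_add_le _ _).trans (by rw [hd1, hd2]; simp))
    rw [hsum, natDegree_C_mul (by norm_num : (2 : ℂ) ≠ 0), hdeg] at hdegsum
    omega
  obtain ⟨k, hk⟩ := hevenS
  refine ⟨k, ?_, ?_, ?_⟩
  · omega
  · omega
  · omega
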